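/- Let ψ ≥ 2, Ψ ≥ 1 and t be integers with 1 ≤ t ≤ ψ. For x ∈ {0, 1, …, ψ−1}, let B_x = { ((y + x) mod ψ)/Ψ : y ∈ {0, 1, …, t−1} } ⊂ ℝ, and for a finite set B ⊂ ℝ and k ∈ ℤ write S_B(k) = ∑_{b ∈ B} e^{−2πi b k}. Let A ⊂ (1/Ψ)·ℤ be a finite set with T = #A ≥ 1 and suppose 4·log(8Ψ) ≤ T. Then there exists a function x : A → {0, 1, …, ψ−1} such that for every k ∈ ℤ, | ∑_{a ∈ A} ( S_{B_{x(a)}}(k)/t − S_{P}(k)/ψ ) e^{−2πi a k} | ≤ 4·T^{1/2}·(log(8Ψ))^{1/2}, where P = {0, 1/Ψ, 2/Ψ, …, (ψ−1)/Ψ}. -/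

import Mathlib

open Finset

namespace RandSelAux

noncomputable def Ek (b : ℝ) (k : ℤ) : ℂ :=
  Complex.exp (-(2 * (Real.pi : ℂ) * Complex.I * (b : ℂ) * (k : ℂ)))

lemma norm_Ek (b : ℝ) (k : ℤ) : ‖Ek b k‖ = 1 := by
  have h : -(2 * (Real.pi : ℂ) * Complex.I * (b : ℂ) * (k : ℂ))
      = ((-(2 * Real.pi * b * k) : ℝ) : ℂ) * Complex.I := by
    push_cast; ring
  rw [Ek, h, Complex.norm_exp_ofReal_mul_I]

lemma Ek_period (Ψ : ℕ) (hΨ : 0 < Ψ) (m : ℤ) (k : ℤ) :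
    Ek ((m : ℝ) / (Ψ : ℝ)) k = Ek ((m : ℝ) / (Ψ : ℝ)) (k % (Ψ : ℤ)) := by
  have hΨ' : (Ψ : ℂ) ≠ 0 := by exact_mod_cast hΨ.ne'
  have hk : (k : ℂ) = (Ψ : ℂ) * ((k / (Ψ : ℤ) : ℤ) : ℂ) + ((k % (Ψ : ℤ) : ℤ) : ℂ) := by
    have h := Int.mul_ediv_add_emod k (Ψ : ℤ)
    have : ((((Ψ:ℤ) * (k / (Ψ:ℤ)) + k % (Ψ:ℤ)) : ℤ) : ℂ) = (k : ℂ) := by rw [h]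
    push_cast at this
    linear_combination -this
  have key : -(2 * (Real.pi : ℂ) * Complex.I * (((m : ℝ) / (Ψ : ℝ) : ℝ) : ℂ) * (k : ℂ))
      = -(2 * (Real.pi : ℂ) * Complex.I * (((m : ℝ) / (Ψ : ℝ) : ℝ) : ℂ) * ((k % (Ψ : ℤ) : ℤ) : ℂ))
        + ((-(m * (k / (Ψ : ℤ))) : ℤ) : ℂ) * (2 * (Real.pi : ℂ) * Complex.I) := by
    rw [hk]; push_cast; field_simp; ring
  rw [Ek, Ek, key, Complex.exp_add, Complex.exp_int_mul_two_pi_mul_I, mul_one]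


noncomputable def Xv (ψ Ψ t : ℕ) (v : ℕ) (k : ℤ) : ℂ :=
  (∑ b ∈ (Finset.range t).image (fun y : ℕ => ((((y + v) % ψ : ℕ) : ℝ) / (Ψ : ℝ))), Ek b k) / (t : ℂ) -
  (∑ b ∈ (Finset.range ψ).image (fun j : ℕ => ((j : ℝ) / (Ψ : ℝ))), Ek b k) / (ψ : ℂ)

lemma norm_sum_image_le (S : Finset ℕ) (f : ℕ → ℝ) (k : ℤ) :
    ‖∑ b ∈ S.image f, Ek b k‖ ≤ (S.card : ℝ) := by
  calc ‖∑ b ∈ S.image f, Ek b k‖ ≤ ∑ b ∈ S.image f, ‖Ek b k‖ := norm_sum_le _ _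
    _ = ∑ _b ∈ S.image f, (1:ℝ) := Finset.sum_congr rfl (fun b _ => norm_Ek b k)
    _ = (S.image f).card := by simp
    _ ≤ (S.card : ℝ) := by exact_mod_cast Finset.card_image_le

lemma norm_Xv_le (ψ Ψ t : ℕ) (hψ : 0 < ψ) (ht : 0 < t) (v : ℕ) (k : ℤ) :
    ‖Xv ψ Ψ t v k‖ ≤ 2 := by
  have h1 : ‖(∑ b ∈ (Finset.range t).image (fun y : ℕ => ((((y + v) % ψ : ℕ) : ℝ) / (Ψ : ℝ))), Ek b k) / (t : ℂ)‖ ≤ 1 := by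
    rw [norm_div]
    rw [div_le_one (by exact_mod_cast ht : (0:ℝ) < ‖(t:ℂ)‖)]
    · calc _ ≤ ((Finset.range t).card : ℝ) := norm_sum_image_le _ _ _
        _ = ‖(t : ℂ)‖ := by simp
  have h2 : ‖(∑ b ∈ (Finset.range ψ).image (fun j : ℕ => ((j : ℝ) / (Ψ : ℝ))), Ek b k) / (ψ : ℂ)‖ ≤ 1 := by
    rw [norm_div]
    rw [div_le_one (by exact_mod_cast hψ : (0:ℝ) < ‖(ψ:ℂ)‖)]
    · calc _ ≤ ((Finset.range ψ).card : ℝ) := norm_sum_image_le _ _ _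
        _ = ‖(ψ : ℂ)‖ := by simp
  calc ‖Xv ψ Ψ t v k‖ ≤ _ + _ := norm_sub_le _ _
    _ ≤ 1 + 1 := add_le_add h1 h2
    _ = 2 := by norm_num

lemma mod_add_injOn (ψ : ℕ) (hψ : 0 < ψ) (c : ℕ) (n : ℕ) (hn : n ≤ ψ) :
    Set.InjOn (fun y : ℕ => (y + c) % ψ) (Finset.range n) := by
  intro y1 h1 y2 h2 h
  simp only [Finset.coe_range, Set.mem_Iio] at h1 h2
  have h' : y1 % ψ = y2 % ψ := Nat.ModEq.add_right_cancel' c h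
  rwa [Nat.mod_eq_of_lt (lt_of_lt_of_le h1 hn), Nat.mod_eq_of_lt (lt_of_lt_of_le h2 hn)] at h'

lemma div_cast_injOn (Ψ : ℕ) (hΨ : 0 < Ψ) :
    Function.Injective (fun j : ℕ => ((j : ℝ) / (Ψ : ℝ))) := by
  intro j1 j2 h
  have hΨ' : (Ψ : ℝ) ≠ 0 := by exact_mod_cast hΨ.ne'
  field_simp at h
  exact_mod_cast h

lemma B_injOn (ψ Ψ : ℕ) (hψ : 0 < ψ) (hΨ : 0 < Ψ) (c : ℕ) (n : ℕ) (hn : n ≤ ψ) :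
    Set.InjOn (fun y : ℕ => ((((y + c) % ψ : ℕ) : ℝ) / (Ψ : ℝ))) (Finset.range n) := by
  intro y1 h1 y2 h2 h
  exact mod_add_injOn ψ hψ c n hn h1 h2 (div_cast_injOn Ψ hΨ h)

lemma mod_image_eq (ψ : ℕ) (hψ : 0 < ψ) (c : ℕ) :
    (Finset.range ψ).image (fun v : ℕ => (v + c) % ψ) = Finset.range ψ := by
  apply Finset.eq_of_subset_of_card_le
  · intro j hj
    simp only [Finset.mem_image] at hj
    obtain ⟨v, _, rfl⟩ := hj
    exact Finset.mem_range.2 (Nat.mod_lt _ hψ)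
  · rw [Finset.card_image_of_injOn (mod_add_injOn ψ hψ c ψ le_rfl), Finset.card_range]

lemma sum_Xv_eq_zero (ψ Ψ t : ℕ) (hψ : 0 < ψ) (hΨ : 0 < Ψ) (ht : 0 < t) (htψ : t ≤ ψ) (k : ℤ) :
    ∑ v ∈ Finset.range ψ, Xv ψ Ψ t v k = 0 := by
  set P := ∑ j ∈ Finset.range ψ, Ek ((j : ℝ) / (Ψ : ℝ)) k with hP
  have hPim : ∑ b ∈ (Finset.range ψ).image (fun j : ℕ => ((j : ℝ) / (Ψ : ℝ))), Ek b k = P :=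
    Finset.sum_image (fun a _ b _ h => div_cast_injOn Ψ hΨ h)
  have hB : ∀ v : ℕ, ∑ b ∈ (Finset.range t).image (fun y : ℕ => ((((y + v) % ψ : ℕ) : ℝ) / (Ψ : ℝ))), Ek b k
      = ∑ y ∈ Finset.range t, Ek ((((y + v) % ψ : ℕ) : ℝ) / (Ψ : ℝ)) k :=
    fun v => Finset.sum_image (B_injOn ψ Ψ hψ hΨ v t htψ)
  have hinner : ∀ y : ℕ, ∑ v ∈ Finset.range ψ, Ek ((((y + v) % ψ : ℕ) : ℝ) / (Ψ : ℝ)) k = P := by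
    intro y
    have h1 : ∑ v ∈ Finset.range ψ, Ek ((((v + y) % ψ : ℕ) : ℝ) / (Ψ : ℝ)) k
        = ∑ j ∈ (Finset.range ψ).image (fun v : ℕ => (v + y) % ψ), Ek ((j : ℝ) / (Ψ : ℝ)) k :=
      (Finset.sum_image (f := fun j : ℕ => Ek ((j : ℝ) / (Ψ : ℝ)) k)
        (fun a ha b hb h => mod_add_injOn ψ hψ y ψ le_rfl ha hb h)).symm
    have hcomm : ∀ v : ℕ, (y + v) % ψ = (v + y) % ψ := fun v => by rw [Nat.add_comm]
    simp only [hcomm]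
    rw [h1, mod_image_eq ψ hψ y]
  have ht' : (t : ℂ) ≠ 0 := by exact_mod_cast ht.ne'
  have hψ' : (ψ : ℂ) ≠ 0 := by exact_mod_cast hψ.ne'
  unfold Xv
  rw [Finset.sum_sub_distrib]
  simp only [hB, hPim]
  rw [← Finset.sum_div, ← Finset.sum_div, Finset.sum_comm, Finset.sum_const, Finset.card_range]
  simp only [hinner]
  rw [Finset.sum_const, Finset.card_range]
  rw [nsmul_eq_mul, nsmul_eq_mul]
  field_simp
  ring


lemma step_exp (n : ℕ) (Y : ℕ → ℝ) (hY : ∀ v ∈ Finset.range n, |Y v| ≤ 2)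
    (h0 : ∑ v ∈ Finset.range n, Y v = 0) (l : ℝ) :
    ∑ v ∈ Finset.range n, Real.exp (l * Y v) ≤ (n : ℝ) * Real.exp (2 * l ^ 2) := by
  have key : ∀ v ∈ Finset.range n, Real.exp (l * Y v)
      ≤ (Y v + 2) / 4 * Real.exp (2 * l) + (2 - Y v) / 4 * Real.exp (-(2 * l)) := by
    intro v hv
    have h2 := abs_le.1 (hY v hv)
    have hc := convexOn_exp.2 (Set.mem_univ (2 * l)) (Set.mem_univ (-(2 * l)))
      (show (0:ℝ) ≤ (Y v + 2) / 4 by linarith [h2.1])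
      (show (0:ℝ) ≤ (2 - Y v) / 4 by linarith [h2.2])
      (show (Y v + 2) / 4 + (2 - Y v) / 4 = 1 by ring)
    simp only [smul_eq_mul] at hc
    have harg : (Y v + 2) / 4 * (2 * l) + (2 - Y v) / 4 * (-(2 * l)) = l * Y v := by ring
    rwa [harg] at hc
  calc ∑ v ∈ Finset.range n, Real.exp (l * Y v)
      ≤ ∑ v ∈ Finset.range n, ((Y v + 2) / 4 * Real.exp (2 * l) + (2 - Y v) / 4 * Real.exp (-(2 * l))) :=
        Finset.sum_le_sum key
    _ = (n : ℝ) / 2 * (Real.exp (2 * l) + Real.exp (-(2 * l))) := by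
        rw [Finset.sum_add_distrib, ← Finset.sum_mul, ← Finset.sum_mul]
        have e1 : ∑ v ∈ Finset.range n, (Y v + 2) / 4 = (n : ℝ) / 2 := by
          rw [← Finset.sum_div, Finset.sum_add_distrib, h0, Finset.sum_const, Finset.card_range]
          push_cast; ring
        have e2 : ∑ v ∈ Finset.range n, (2 - Y v) / 4 = (n : ℝ) / 2 := by
          rw [← Finset.sum_div, Finset.sum_sub_distrib, h0, Finset.sum_const, Finset.card_range]
          push_cast; ring
        rw [e1, e2]; ring
    _ = (n : ℝ) * Real.cosh (2 * l) := by rw [Real.cosh_eq]; ring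
    _ ≤ (n : ℝ) * Real.exp (2 * l ^ 2) := by
        have := Real.cosh_le_exp_half_sq (2 * l)
        have h22 : (2 * l) ^ 2 / 2 = 2 * l ^ 2 := by ring
        rw [h22] at this
        exact mul_le_mul_of_nonneg_left this (Nat.cast_nonneg n)


lemma mgf_bound (ψ Ψ t : ℕ) (hψ : 0 < ψ) (hΨ : 0 < Ψ) (ht : 0 < t) (htψ : t ≤ ψ)
    (A : Finset ℝ) (c : ℂ) (hc : ‖c‖ = 1) (r : ℤ) (l : ℝ) :
    ∑ ω : ({a : ℝ // a ∈ A} → Fin ψ),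
      Real.exp (l * (c * ∑ a ∈ A.attach, Xv ψ Ψ t (ω a) r * Ek (a : ℝ) r).re)
    ≤ ((ψ : ℝ) * Real.exp (2 * l ^ 2)) ^ A.card := by
  classical
  have h1 : ∀ ω : ({a : ℝ // a ∈ A} → Fin ψ),
      Real.exp (l * (c * ∑ a ∈ A.attach, Xv ψ Ψ t (ω a) r * Ek (a : ℝ) r).re)
      = ∏ a ∈ A.attach, Real.exp (l * (c * (Xv ψ Ψ t (ω a) r * Ek (a : ℝ) r)).re) := by
    intro ω
    rw [Finset.mul_sum, Complex.re_sum, Finset.mul_sum, Real.exp_sum]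
  simp only [h1]
  have h2 : ∑ ω : ({a : ℝ // a ∈ A} → Fin ψ),
      ∏ a ∈ A.attach, Real.exp (l * (c * (Xv ψ Ψ t (ω a) r * Ek (a : ℝ) r)).re)
      = ∏ a ∈ A.attach, ∑ v : Fin ψ, Real.exp (l * (c * (Xv ψ Ψ t (v : ℕ) r * Ek (a : ℝ) r)).re) := by
    rw [← Finset.univ_eq_attach]
    exact (Fintype.prod_sum (fun (a : {x : ℝ // x ∈ A}) (v : Fin ψ) =>
      Real.exp (l * (c * (Xv ψ Ψ t (v : ℕ) r * Ek (a : ℝ) r)).re))).symm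
  rw [h2]
  have h3 : ∀ a ∈ A.attach,
      ∑ v : Fin ψ, Real.exp (l * (c * (Xv ψ Ψ t (v : ℕ) r * Ek (a : ℝ) r)).re)
      ≤ (ψ : ℝ) * Real.exp (2 * l ^ 2) := by
    intro a _
    rw [Fin.sum_univ_eq_sum_range (fun v => Real.exp (l * (c * (Xv ψ Ψ t v r * Ek (a : ℝ) r)).re)) ψ]
    apply step_exp
    · intro v _
      have hb : |(c * (Xv ψ Ψ t v r * Ek (a : ℝ) r)).re| ≤ ‖c * (Xv ψ Ψ t v r * Ek (a : ℝ) r)‖ :=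
        Complex.abs_re_le_norm _
      refine hb.trans ?_
      rw [norm_mul, norm_mul, hc, one_mul, norm_Ek, mul_one]
      exact norm_Xv_le ψ Ψ t hψ ht v r
    · have hre : ∀ v : ℕ, c * (Xv ψ Ψ t v r * Ek (a : ℝ) r) = (c * Ek (a : ℝ) r) * Xv ψ Ψ t v r :=
        fun v => by ring
      simp only [hre]
      rw [← Complex.re_sum, ← Finset.mul_sum, sum_Xv_eq_zero ψ Ψ t hψ hΨ ht htψ r,
        mul_zero, Complex.zero_re]
  calc ∏ a ∈ A.attach, ∑ v : Fin ψ, Real.exp (l * (c * (Xv ψ Ψ t (v : ℕ) r * Ek (a : ℝ) r)).re)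
      ≤ ∏ _a ∈ A.attach, ((ψ : ℝ) * Real.exp (2 * l ^ 2)) :=
        Finset.prod_le_prod (fun a _ => Finset.sum_nonneg fun v _ => (Real.exp_pos _).le) h3
    _ = ((ψ : ℝ) * Real.exp (2 * l ^ 2)) ^ A.card := by
        rw [Finset.prod_const, Finset.card_attach]


lemma Xv_period (ψ Ψ t : ℕ) (hΨ : 0 < Ψ) (v : ℕ) (k : ℤ) :
    Xv ψ Ψ t v k = Xv ψ Ψ t v (k % (Ψ : ℤ)) := by
  unfold Xv
  congr 1
  · congr 1
    apply Finset.sum_congr rfl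
    intro b hb
    simp only [Finset.mem_image] at hb
    obtain ⟨y, _, rfl⟩ := hb
    simpa only [Int.cast_natCast] using Ek_period Ψ hΨ (((y + v) % ψ : ℕ) : ℤ) k
  · congr 1
    apply Finset.sum_congr rfl
    intro b hb
    simp only [Finset.mem_image] at hb
    obtain ⟨j, _, rfl⟩ := hb
    simpa using Ek_period Ψ hΨ (j : ℤ) k

end RandSelAux

set_option maxHeartbeats 2000000 in
open RandSelAux in
/-- **Random selection step.** Given integers `ψ ≥ 2`, `Ψ ≥ 1`, `1 ≤ t ≤ ψ`, the translated
blocks `B_x = {((y+x) mod ψ)/Ψ : 0 ≤ y < t}` for `x ∈ {0,…,ψ-1}`, and a finite set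
`A ⊆ (1/Ψ)ℤ` with `T = #A` satisfying `4 log(8Ψ) ≤ T`, there is a choice `x : A → {0,…,ψ-1}`
such that for all `k ∈ ℤ`,
`|∑_{a ∈ A} (S_{B_{x(a)}}(k)/t - S_P(k)/ψ) e^{-2πiak}| ≤ 4 √T √(log(8Ψ))`,
where `P = {0, 1/Ψ, …, (ψ-1)/Ψ}` and `S_B(k) = ∑_{b ∈ B} e^{-2πibk}`. -/
theorem random_selection_exponential_sum_bound
    (ψ Ψ t : ℕ) (hψ : 2 ≤ ψ) (hΨ : 1 ≤ Ψ) (ht1 : 1 ≤ t) (htψ : t ≤ ψ)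
    (A : Finset ℝ) (hA : ∀ a ∈ A, ∃ m : ℤ, a = (m : ℝ) / (Ψ : ℝ))
    (hT : 1 ≤ A.card)
    (hlog : 4 * Real.log (8 * (Ψ : ℝ)) ≤ (A.card : ℝ)) :
    ∃ x : ℝ → ℕ, (∀ a ∈ A, x a < ψ) ∧
      ∀ k : ℤ,
        ‖∑ a ∈ A,
            ((∑ b ∈ (Finset.range t).image (fun y : ℕ => ((((y + x a) % ψ : ℕ) : ℝ) / (Ψ : ℝ))),
                Complex.exp (-(2 * (Real.pi : ℂ) * Complex.I * (b : ℂ) * (k : ℂ)))) / (t : ℂ) -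
              (∑ b ∈ (Finset.range ψ).image (fun j : ℕ => ((j : ℝ) / (Ψ : ℝ))),
                Complex.exp (-(2 * (Real.pi : ℂ) * Complex.I * (b : ℂ) * (k : ℂ)))) / (ψ : ℂ)) *
            Complex.exp (-(2 * (Real.pi : ℂ) * Complex.I * (a : ℂ) * (k : ℂ)))‖
          ≤ 4 * Real.sqrt (A.card : ℝ) * Real.sqrt (Real.log (8 * (Ψ : ℝ))) := by
  classical
  have hψ0 : 0 < ψ := by omega
  have hΨ0 : 0 < Ψ := hΨ
  have ht0 : 0 < t := ht1
  set T := A.card with hTdef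
  have hT0 : (0:ℝ) < (T : ℝ) := by exact_mod_cast hT
  set L := Real.log (8 * (Ψ : ℝ)) with hLdef
  have h8Ψpos : (0:ℝ) < 8 * (Ψ : ℝ) := by
    have : (1:ℝ) ≤ (Ψ : ℝ) := by exact_mod_cast hΨ
    linarith
  have hL0 : 0 ≤ L := Real.log_nonneg (by
    have : (1:ℝ) ≤ (Ψ : ℝ) := by exact_mod_cast hΨ
    linarith)
  set l := Real.sqrt (L / (2 * (T : ℝ))) with hldef
  have hl0 : 0 ≤ l := Real.sqrt_nonneg _
  have hl2 : l ^ 2 = L / (2 * (T : ℝ)) := Real.sq_sqrt (by positivity)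
  set s := 4 * (T : ℝ) * l with hsdef
  have hs0 : 0 ≤ s := by positivity
  have hls : l * s = 2 * L := by
    have : l * s = 4 * (T : ℝ) * l ^ 2 := by rw [hsdef]; ring
    rw [this, hl2]; field_simp; ring
  have h2l2T : 2 * l ^ 2 * (T : ℝ) = L := by rw [hl2]; field_simp
  set F : ({a : ℝ // a ∈ A} → Fin ψ) → ℤ → ℂ :=
    fun ω k => ∑ a ∈ A.attach, Xv ψ Ψ t (ω a) k * Ek (a : ℝ) k with hF
  set cs : ℕ → ℂ := fun i =>
    if i = 0 then 1 else if i = 1 then -1 else if i = 2 then Complex.I else -Complex.I with hcs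
  have hcnorm : ∀ i, ‖cs i‖ = 1 := by
    intro i
    simp only [hcs]
    split_ifs <;> simp
  set Bad : ℕ → ℕ → Finset ({a : ℝ // a ∈ A} → Fin ψ) :=
    fun r i => Finset.univ.filter (fun ω => s < (cs i * F ω (r : ℤ)).re) with hBad
  have hcardBad : ∀ r i, ((Bad r i).card : ℝ) ≤ ((ψ : ℝ)) ^ T / (8 * (Ψ : ℝ)) := by
    intro r i
    have mgf := mgf_bound ψ Ψ t hψ0 hΨ0 ht0 htψ A (cs i) (hcnorm i) (r : ℤ) l
    have h1 : ((Bad r i).card : ℝ) * Real.exp (l * s)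
        ≤ ∑ ω : ({a : ℝ // a ∈ A} → Fin ψ), Real.exp (l * (cs i * F ω (r : ℤ)).re) := by
      have hsub : ∑ ω ∈ Bad r i, Real.exp (l * s)
          ≤ ∑ ω ∈ Bad r i, Real.exp (l * (cs i * F ω (r : ℤ)).re) := by
        apply Finset.sum_le_sum
        intro ω hω
        apply Real.exp_le_exp.2
        apply mul_le_mul_of_nonneg_left _ hl0
        exact le_of_lt (Finset.mem_filter.1 hω).2
      calc ((Bad r i).card : ℝ) * Real.exp (l * s)
          = ∑ _ω ∈ Bad r i, Real.exp (l * s) := by rw [Finset.sum_const, nsmul_eq_mul]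
        _ ≤ ∑ ω ∈ Bad r i, Real.exp (l * (cs i * F ω (r : ℤ)).re) := hsub
        _ ≤ ∑ ω : ({a : ℝ // a ∈ A} → Fin ψ), Real.exp (l * (cs i * F ω (r : ℤ)).re) :=
            Finset.sum_le_sum_of_subset_of_nonneg (Finset.subset_univ _)
              (fun _ _ _ => (Real.exp_pos _).le)
    have h2 : ((ψ : ℝ) * Real.exp (2 * l ^ 2)) ^ T = (ψ : ℝ) ^ T * Real.exp L := by
      rw [mul_pow, ← Real.exp_nat_mul]
      congr 1
      rw [← h2l2T]; ring
    have h3 : ((Bad r i).card : ℝ) * Real.exp (l * s) ≤ (ψ : ℝ) ^ T * Real.exp L :=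
      h1.trans (mgf.trans_eq h2)
    have hexpE : Real.exp L / Real.exp (l * s) = 1 / (8 * (Ψ : ℝ)) := by
      rw [hls, ← Real.exp_sub]
      have : L - 2 * L = -L := by ring
      rw [this, Real.exp_neg, hLdef, Real.exp_log h8Ψpos, one_div]
    have := (le_div_iff₀ (Real.exp_pos (l * s))).2 h3
    calc ((Bad r i).card : ℝ) ≤ (ψ : ℝ) ^ T * Real.exp L / Real.exp (l * s) := this
      _ = (ψ : ℝ) ^ T * (Real.exp L / Real.exp (l * s)) := by ring
      _ = (ψ : ℝ) ^ T / (8 * (Ψ : ℝ)) := by rw [hexpE]; ring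
  set BigBad : Finset ({a : ℝ // a ∈ A} → Fin ψ) :=
    (Finset.range Ψ ×ˢ Finset.range 4).biUnion (fun p => Bad p.1 p.2) with hBigBad
  have hcard_univ : (Fintype.card ({a : ℝ // a ∈ A} → Fin ψ) : ℝ) = (ψ : ℝ) ^ T := by
    rw [Fintype.card_fun, Fintype.card_coe, Fintype.card_fin]
    push_cast; ring
  have hψTpos : (0:ℝ) < (ψ : ℝ) ^ T := by positivity
  have hcardBig : (BigBad.card : ℝ) < (Fintype.card ({a : ℝ // a ∈ A} → Fin ψ) : ℝ) := by
    rw [hcard_univ]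
    calc (BigBad.card : ℝ)
        ≤ ∑ p ∈ Finset.range Ψ ×ˢ Finset.range 4, ((Bad p.1 p.2).card : ℝ) := by
          exact_mod_cast Finset.card_biUnion_le
      _ ≤ ∑ _p ∈ Finset.range Ψ ×ˢ Finset.range 4, ((ψ : ℝ) ^ T / (8 * (Ψ : ℝ))) :=
          Finset.sum_le_sum (fun p _ => hcardBad p.1 p.2)
      _ = ((Ψ : ℝ) * 4) * ((ψ : ℝ) ^ T / (8 * (Ψ : ℝ))) := by
          rw [Finset.sum_const, Finset.card_product, Finset.card_range, Finset.card_range,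
            nsmul_eq_mul]
          push_cast; ring
      _ = (ψ : ℝ) ^ T / 2 := by
          have hΨne : (Ψ : ℝ) ≠ 0 := by positivity
          field_simp
          ring
      _ < (ψ : ℝ) ^ T := by linarith
  obtain ⟨ω, hω⟩ : ∃ ω : ({a : ℝ // a ∈ A} → Fin ψ), ω ∉ BigBad := by
    by_contra h
    push_neg at h
    have hsub : (Finset.univ : Finset ({a : ℝ // a ∈ A} → Fin ψ)) ⊆ BigBad := fun ω _ => h ω
    have := Finset.card_le_card hsub
    rw [Finset.card_univ] at this
    have : (Fintype.card ({a : ℝ // a ∈ A} → Fin ψ) : ℝ) ≤ (BigBad.card : ℝ) := by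
      exact_mod_cast this
    linarith
  have hgood : ∀ r : ℕ, r < Ψ → ∀ i : ℕ, i < 4 → (cs i * F ω (r : ℤ)).re ≤ s := by
    intro r hr i hi
    by_contra hlt
    push_neg at hlt
    exact hω (Finset.mem_biUnion.2 ⟨(r, i),
      Finset.mem_product.2 ⟨Finset.mem_range.2 hr, Finset.mem_range.2 hi⟩,
      Finset.mem_filter.2 ⟨Finset.mem_univ _, hlt⟩⟩)
  refine ⟨fun a => if h : a ∈ A then ((ω ⟨a, h⟩ : Fin ψ) : ℕ) else 0, ?_, ?_⟩
  · intro a ha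
    simp only [dif_pos ha]
    exact (ω ⟨a, ha⟩).isLt
  intro k
  have hstmt : ∑ a ∈ A,
      Xv ψ Ψ t (if h : a ∈ A then ((ω ⟨a, h⟩ : Fin ψ) : ℕ) else 0) k * Ek a k = F ω k := by
    rw [hF]
    rw [← Finset.sum_attach A
      (fun a => Xv ψ Ψ t (if h : a ∈ A then ((ω ⟨a, h⟩ : Fin ψ) : ℕ) else 0) k * Ek a k)]
    apply Finset.sum_congr rfl
    intro a _
    simp only [dif_pos a.2, Subtype.coe_eta]
  show ‖∑ a ∈ A,
      Xv ψ Ψ t (if h : a ∈ A then ((ω ⟨a, h⟩ : Fin ψ) : ℕ) else 0) k * Ek a k‖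
      ≤ 4 * Real.sqrt (T : ℝ) * Real.sqrt L
  rw [hstmt]
  -- periodicity
  set r : ℕ := (k % (Ψ : ℤ)).toNat with hrdef
  have hΨZ : (0:ℤ) < (Ψ : ℤ) := by exact_mod_cast hΨ0
  have hrk : ((r : ℕ) : ℤ) = k % (Ψ : ℤ) := Int.toNat_of_nonneg (Int.emod_nonneg k hΨZ.ne')
  have hrΨ : r < Ψ := by
    have h1 : k % (Ψ : ℤ) < (Ψ : ℤ) := Int.emod_lt_of_pos k hΨZ
    omega
  have hFper : F ω k = F ω (r : ℤ) := by
    rw [hF]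
    apply Finset.sum_congr rfl
    intro a _
    have h1 : Xv ψ Ψ t (ω a) k = Xv ψ Ψ t (ω a) ((r : ℕ) : ℤ) := by
      rw [hrk]; exact Xv_period ψ Ψ t hΨ0 (ω a) k
    have h2 : Ek (a : ℝ) k = Ek (a : ℝ) ((r : ℕ) : ℤ) := by
      obtain ⟨m, hm⟩ := hA (a : ℝ) a.2
      rw [hm, hrk]
      exact Ek_period Ψ hΨ0 m k
    rw [h1, h2]
  rw [hFper]
  have hre : (F ω (r : ℤ)).re ≤ s := by
    simpa [hcs] using hgood r hrΨ 0 (by norm_num)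
  have hre' : -(F ω (r : ℤ)).re ≤ s := by
    simpa [hcs] using hgood r hrΨ 1 (by norm_num)
  have him' : -(F ω (r : ℤ)).im ≤ s := by
    simpa [hcs, Complex.mul_re] using hgood r hrΨ 2 (by norm_num)
  have him : (F ω (r : ℤ)).im ≤ s := by
    simpa [hcs, Complex.mul_re] using hgood r hrΨ 3 (by norm_num)
  have hnorm : ‖F ω (r : ℤ)‖ ≤ Real.sqrt 2 * s := by
    have hz2 : ‖F ω (r : ℤ)‖ = Real.sqrt ((F ω (r : ℤ)).re ^ 2 + (F ω (r : ℤ)).im ^ 2) := by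
      rw [Complex.norm_def, Complex.normSq_apply]
      ring_nf
    rw [hz2]
    have hb : (F ω (r : ℤ)).re ^ 2 + (F ω (r : ℤ)).im ^ 2 ≤ 2 * s ^ 2 := by nlinarith
    calc Real.sqrt ((F ω (r : ℤ)).re ^ 2 + (F ω (r : ℤ)).im ^ 2)
        ≤ Real.sqrt (2 * s ^ 2) := Real.sqrt_le_sqrt hb
      _ = Real.sqrt 2 * s := by
          rw [Real.sqrt_mul (by norm_num : (0:ℝ) ≤ 2), Real.sqrt_sq hs0]
  have hfinal : Real.sqrt 2 * s ≤ 4 * Real.sqrt (T : ℝ) * Real.sqrt L := by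
    have hA2 : 0 ≤ Real.sqrt 2 * s := by positivity
    have hB2 : 0 ≤ 4 * Real.sqrt (T : ℝ) * Real.sqrt L := by positivity
    rw [← pow_le_pow_iff_left₀ hA2 hB2 (two_ne_zero)]
    have e1 : (Real.sqrt 2) ^ 2 = 2 := Real.sq_sqrt (by norm_num)
    have e2 : (Real.sqrt (T : ℝ)) ^ 2 = (T : ℝ) := Real.sq_sqrt hT0.le
    have e3 : (Real.sqrt L) ^ 2 = L := Real.sq_sqrt hL0
    have expand : (Real.sqrt 2 * s) ^ 2 = 2 * (16 * (T : ℝ) ^ 2 * l ^ 2) := by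
      rw [mul_pow, e1, hsdef]; ring
    have expand2 : (4 * Real.sqrt (T : ℝ) * Real.sqrt L) ^ 2 = 16 * (T : ℝ) * L := by
      rw [mul_pow, mul_pow, e2, e3]; ring
    rw [expand, expand2, hl2]
    apply le_of_eq
    field_simp
  exact le_trans hnorm hfinal
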